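/- Let 𝒢 = (G_n,‖·‖_n)_{n∈ℕ} be a family of metric groups whose norms are all bounded by 1 and whose underlying family of groups (G_n) has the (⋆)-property, and let 𝒰 be a nonprincipal ultrafilter on ℕ. If the metric ultraproduct 𝒢*_met = (∏_n G_n)/ℰ is a simple (in particular nontrivial) group, then 𝒢*_met is metrically uniformly simple. -/

import Mathlib

open Filter Set Pointwise ENNReal

/-- `CN N g` : the set of all products of at most `N` conjugates of `g` and `g⁻¹`. -/
def CN {H : Type*} [Group H] (N : ℕ) (g : H) : Set H :=
  ⋃ m ≤ N, ({x | IsConj g x} ∪ {x | IsConj g⁻¹ x}) ^ m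

/-- A family of groups equipped with conjugation-invariant pseudo-norms with values in `[0,∞]`. -/
structure PMFamily where
  G : ℕ → Type
  grp : ∀ n, Group (G n)
  ν : ∀ n, G n → ℝ≥0∞
  norm_one : ∀ n, ν n 1 = 0
  norm_mul : ∀ n (g h : G n), ν n (g * h) ≤ ν n g + ν n h
  norm_inv : ∀ n (g : G n), ν n g⁻¹ = ν n g
  norm_conj : ∀ n (g h : G n), ν n (h * g * h⁻¹) = ν n g

attribute [instance] PMFamily.grp

namespace PMFamily

variable (𝒢 : PMFamily) (U : Ultrafilter ℕ)

/-- The subgroup of infinitesimal sequences. -/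
def E : Subgroup (∀ n, 𝒢.G n) where
  carrier := {g | ∀ ε : ℝ≥0∞, 0 < ε → {n | 𝒢.ν n (g n) < ε} ∈ U}
  one_mem' := by
    intro ε hε
    have h : {n | 𝒢.ν n ((1 : ∀ n, 𝒢.G n) n) < ε} = Set.univ := by
      ext n; simpa [𝒢.norm_one n] using hε
    show {n | 𝒢.ν n ((1 : ∀ n, 𝒢.G n) n) < ε} ∈ U
    rw [h]
    exact Filter.univ_mem
  mul_mem' := by
    intro g h hg hh ε hε
    have h2 : (0 : ℝ≥0∞) < ε / 2 := ENNReal.half_pos hε.ne'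
    have key : {n | 𝒢.ν n (g n) < ε / 2} ∩ {n | 𝒢.ν n (h n) < ε / 2} ⊆
        {n | 𝒢.ν n ((g * h) n) < ε} := by
      rintro n ⟨h1, h1'⟩
      simp only [Set.mem_setOf_eq] at h1 h1' ⊢
      calc 𝒢.ν n ((g * h) n) = 𝒢.ν n (g n * h n) := rfl
        _ ≤ 𝒢.ν n (g n) + 𝒢.ν n (h n) := 𝒢.norm_mul n _ _
        _ < ε / 2 + ε / 2 := ENNReal.add_lt_add h1 h1'
        _ = ε := ENNReal.add_halves ε
    exact Filter.mem_of_superset (Filter.inter_mem (hg _ h2) (hh _ h2)) key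
  inv_mem' := by
    intro g hg ε hε
    have h : {n | 𝒢.ν n (g⁻¹ n) < ε} = {n | 𝒢.ν n (g n) < ε} := by
      ext n; simp only [Set.mem_setOf_eq, Pi.inv_apply, 𝒢.norm_inv n]
    show {n | 𝒢.ν n (g⁻¹ n) < ε} ∈ U
    rw [h]
    exact hg ε hε

theorem mem_E {g : ∀ n, 𝒢.G n} :
    g ∈ 𝒢.E U ↔ ∀ ε : ℝ≥0∞, 0 < ε → {n | 𝒢.ν n (g n) < ε} ∈ U := Iff.rfl

instance normal_E : (𝒢.E U).Normal := by
  constructor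
  intro g hg h
  rw [mem_E] at hg ⊢
  intro ε hε
  have heq : {n | 𝒢.ν n ((h * g * h⁻¹) n) < ε} = {n | 𝒢.ν n (g n) < ε} := by
    ext n
    simp only [Set.mem_setOf_eq, Pi.mul_apply, Pi.inv_apply, 𝒢.norm_conj n]
  rw [heq]
  exact hg ε hε

/-- The metric ultraproduct. -/
abbrev Q := (∀ n, 𝒢.G n) ⧸ 𝒢.E U

/-- The limit of the norms along the ultrafilter, on the product group. -/
noncomputable def pnorm (g : ∀ n, 𝒢.G n) : ℝ≥0∞ :=
  Filter.limsup (fun n => 𝒢.ν n (g n)) U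

/-- The induced norm on the metric ultraproduct. -/
noncomputable def qnorm (x : 𝒢.Q U) : ℝ≥0∞ := 𝒢.pnorm U (Quotient.out x)

/-- The open ball of radius `ε` around the identity in the metric ultraproduct. -/
def ball (ε : ℝ≥0∞) : Set (𝒢.Q U) := {x | 𝒢.qnorm U x < ε}

/-- Metrically internal subsets of the metric ultraproduct. -/
def internalSet (Xn : ∀ n, Set (𝒢.G n)) : Set (𝒢.Q U) :=
  (QuotientGroup.mk : (∀ n, 𝒢.G n) → 𝒢.Q U) '' {g | ∀ n, g n ∈ Xn n}

/-- The finitary subgroup of the metric ultraproduct: classes of uniformly bounded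
sequences (equivalently, elements of finite norm). -/
def finSubgroup : Subgroup (𝒢.Q U) where
  carrier := {x | ∃ g : ∀ n, 𝒢.G n, QuotientGroup.mk g = x ∧
    ∃ C : ℝ≥0∞, C ≠ ⊤ ∧ ∀ n, 𝒢.ν n (g n) ≤ C}
  one_mem' := ⟨1, rfl, 0, by simp, fun n => by simp [𝒢.norm_one n]⟩
  mul_mem' := by
    rintro x y ⟨g, rfl, C, hC, hg⟩ ⟨h, rfl, D, hD, hh⟩
    refine ⟨g * h, rfl, C + D, ENNReal.add_ne_top.mpr ⟨hC, hD⟩, fun n => ?_⟩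
    exact le_trans (𝒢.norm_mul n (g n) (h n)) (add_le_add (hg n) (hh n))
  inv_mem' := by
    rintro x ⟨g, rfl, C, hC, hg⟩
    exact ⟨g⁻¹, rfl, C, hC, fun n => by rw [Pi.inv_apply, 𝒢.norm_inv n]; exact hg n⟩

end PMFamily

/-- `Ng g = min {n : C_n(g,G) = G}` (and `⊤` if there is no such `n`). -/
noncomputable def Ng {H : Type*} [Group H] (g : H) : ℕ∞ :=
  sInf {x : ℕ∞ | ∃ m : ℕ, x = m ∧ CN m g = Set.univ}

/-- The `(⋆)`-property for a family of groups. -/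
def StarProp (G : ℕ → Type) [∀ n, Group (G n)] : Prop :=
  (∃ N : ℕ, ∀ n, ∃ g : G n, CN N g = Set.univ) ∧
  (∀ k : ℕ, ∃ l : ℕ, ∀ n (g h : G n),
    (l : ℕ∞) ≤ Ng g → (l : ℕ∞) ≤ Ng h → (k : ℕ∞) ≤ Ng (g * h))

/-- The set `Z_𝒰` of sequences whose coordinates need more and more conjugates
to normally generate, along `𝒰`. -/
def ZU (G : ℕ → Type) [∀ n, Group (G n)] (U : Ultrafilter ℕ) : Set (∀ n, G n) :=
  {g | ∀ k : ℕ, {n | (k : ℕ∞) < Ng (g n)} ∈ U}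


section Aux17

open Filter Set Pointwise ENNReal

/-- The generating set of conjugates of `g` and `g⁻¹`. -/
def CGen {H : Type*} [Group H] (g : H) : Set H := {x | IsConj g x} ∪ {x | IsConj g⁻¹ x}

lemma CN_eq_iUnion {H : Type*} [Group H] (N : ℕ) (g : H) :
    CN N g = ⋃ m ≤ N, CGen g ^ m := rfl

lemma mem_CN_iff {H : Type*} [Group H] {N : ℕ} {g x : H} :
    x ∈ CN N g ↔ ∃ m ≤ N, x ∈ CGen g ^ m := by
  simp [CN_eq_iUnion]

lemma isConj_setOf_eq {H : Type*} [Group H] {a b : H} (h : IsConj a b) :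
    {x | IsConj a x} = {x | IsConj b x} :=
  Set.ext fun x => ⟨fun hx => h.symm.trans hx, fun hx => h.trans hx⟩

lemma SSet_inv {H : Type*} [Group H] (g : H) : CGen g⁻¹ = CGen g := by
  simp [CGen, inv_inv, Set.union_comm]

lemma SSet_conj {H : Type*} [Group H] (g c : H) : CGen (c * g * c⁻¹) = CGen g := by
  have h1 : IsConj g (c * g * c⁻¹) := isConj_iff.2 ⟨c, rfl⟩
  have h2 : IsConj g⁻¹ (c * g * c⁻¹)⁻¹ := by
    rw [show (c * g * c⁻¹)⁻¹ = c * g⁻¹ * c⁻¹ by group]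
    exact isConj_iff.2 ⟨c, rfl⟩
  show {x | IsConj (c * g * c⁻¹) x} ∪ {x | IsConj (c * g * c⁻¹)⁻¹ x} = CGen g
  rw [← isConj_setOf_eq h1, ← isConj_setOf_eq h2]
  rfl

lemma CN_inv {H : Type*} [Group H] (N : ℕ) (g : H) : CN N g⁻¹ = CN N g := by
  rw [CN_eq_iUnion, CN_eq_iUnion, SSet_inv]

lemma CN_conj {H : Type*} [Group H] (N : ℕ) (g c : H) : CN N (c * g * c⁻¹) = CN N g := by
  rw [CN_eq_iUnion, CN_eq_iUnion, SSet_conj]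

lemma Ng_inv {H : Type*} [Group H] (g : H) : Ng g⁻¹ = Ng g := by
  unfold Ng; simp only [CN_inv]

lemma Ng_conj {H : Type*} [Group H] (g c : H) : Ng (c * g * c⁻¹) = Ng g := by
  unfold Ng; simp only [CN_conj]

lemma Ng_le_of_CN {H : Type*} [Group H] {m : ℕ} {g : H} (h : CN m g = Set.univ) :
    Ng g ≤ (m : ℕ∞) := sInf_le ⟨m, rfl, h⟩

lemma exists_CN_of_Ng_lt {H : Type*} [Group H] {g : H} {l : ℕ∞} (h : Ng g < l) :
    ∃ m : ℕ, (m : ℕ∞) < l ∧ CN m g = Set.univ := by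
  obtain ⟨a, ⟨m, rfl, hm⟩, hlt⟩ := sInf_lt_iff.1 h
  exact ⟨m, hlt, hm⟩

lemma SSet_one {H : Type*} [Group H] : CGen (1 : H) = 1 := by
  ext y
  simp only [CGen, inv_one, Set.union_self, Set.mem_setOf_eq, Set.mem_one]
  constructor
  · rintro ⟨c, hc⟩
    simpa [SemiconjBy] using hc.symm
  · rintro rfl; exact IsConj.refl 1

lemma Ng_one_of_nontrivial {H : Type*} [Group H] (h : ∃ x : H, x ≠ 1) : Ng (1 : H) = ⊤ := by
  obtain ⟨x, hx⟩ := h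
  unfold Ng
  convert sInf_empty
  · rfl
  ext a
  simp only [Set.mem_setOf_eq, Set.mem_empty_iff_false, iff_false, not_exists]
  rintro m ⟨rfl, hm⟩
  have hxmem : x ∈ CN m (1 : H) := hm ▸ Set.mem_univ x
  obtain ⟨k, -, hk⟩ := mem_CN_iff.1 hxmem
  rw [SSet_one, one_pow, Set.mem_one] at hk
  exact hx hk

end Aux17

namespace PMFamily

open Filter Set Pointwise ENNReal

variable (𝒢 : PMFamily) (U : Ultrafilter ℕ)

lemma norm_CGen {n : ℕ} {g x : 𝒢.G n} (h : x ∈ CGen g) : 𝒢.ν n x = 𝒢.ν n g := by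
  rcases h with h | h
  · obtain ⟨c, hc⟩ := isConj_iff.1 h
    rw [← hc, 𝒢.norm_conj]
  · obtain ⟨c, hc⟩ := isConj_iff.1 h
    rw [← hc, 𝒢.norm_conj, 𝒢.norm_inv]

lemma norm_CGen_pow {n : ℕ} {g : 𝒢.G n} : ∀ {m : ℕ} {x : 𝒢.G n}, x ∈ CGen g ^ m →
    𝒢.ν n x ≤ (m : ℝ≥0∞) * 𝒢.ν n g := by
  intro m
  induction m with
  | zero =>
      intro x hx
      rw [pow_zero, Set.mem_one] at hx
      simp [hx, 𝒢.norm_one]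
  | succ m ih =>
      intro x hx
      rw [pow_succ] at hx
      obtain ⟨a, ha, b, hb, rfl⟩ := hx
      calc 𝒢.ν n (a * b) ≤ 𝒢.ν n a + 𝒢.ν n b := 𝒢.norm_mul n a b
        _ ≤ (m : ℝ≥0∞) * 𝒢.ν n g + 𝒢.ν n g := add_le_add (ih ha) (le_of_eq (𝒢.norm_CGen hb))
        _ = ((m + 1 : ℕ) : ℝ≥0∞) * 𝒢.ν n g := by push_cast; ring

lemma mk_eq_mk_of_uset {a b : ∀ n, 𝒢.G n} (h : {n | a n = b n} ∈ U) :
    (QuotientGroup.mk a : 𝒢.Q U) = QuotientGroup.mk b := by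
  rw [QuotientGroup.eq]
  refine (𝒢.mem_E U).2 fun ε hε => ?_
  refine Filter.mem_of_superset h fun n hn => ?_
  simp only [Set.mem_setOf_eq] at hn ⊢
  have : (a⁻¹ * b) n = 1 := by simp [hn]
  rw [this, 𝒢.norm_one]
  exact hε

lemma mk_mem_CGen {g b : ∀ n, 𝒢.G n} (h : {n | b n ∈ CGen (g n)} ∈ U) :
    (QuotientGroup.mk b : 𝒢.Q U) ∈ CGen (QuotientGroup.mk g : 𝒢.Q U) := by
  have hun : {n | IsConj (g n) (b n)} ∪ {n | IsConj (g n)⁻¹ (b n)} ∈ U :=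
    Filter.mem_of_superset h fun n hn => hn
  rcases Ultrafilter.union_mem_iff.1 hun with h1 | h1
  · have hc : ∀ n, ∃ c : 𝒢.G n, IsConj (g n) (b n) → c * g n * c⁻¹ = b n := by
      intro n
      by_cases hn : IsConj (g n) (b n)
      · obtain ⟨c, hc⟩ := isConj_iff.1 hn
        exact ⟨c, fun _ => hc⟩
      · exact ⟨1, fun hcon => absurd hcon hn⟩
    choose c hc using hc
    have heq : (QuotientGroup.mk b : 𝒢.Q U) =
        QuotientGroup.mk c * QuotientGroup.mk g * (QuotientGroup.mk c)⁻¹ := by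
      rw [← QuotientGroup.mk_inv, ← QuotientGroup.mk_mul, ← QuotientGroup.mk_mul]
      exact 𝒢.mk_eq_mk_of_uset U (Filter.mem_of_superset h1 fun n hn => (hc n hn).symm)
    exact Set.mem_union_left _ (isConj_iff.2 ⟨QuotientGroup.mk c, heq.symm⟩)
  · have hc : ∀ n, ∃ c : 𝒢.G n, IsConj (g n)⁻¹ (b n) → c * (g n)⁻¹ * c⁻¹ = b n := by
      intro n
      by_cases hn : IsConj (g n)⁻¹ (b n)
      · obtain ⟨c, hc⟩ := isConj_iff.1 hn
        exact ⟨c, fun _ => hc⟩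
      · exact ⟨1, fun hcon => absurd hcon hn⟩
    choose c hc using hc
    have heq : (QuotientGroup.mk b : 𝒢.Q U) =
        QuotientGroup.mk c * (QuotientGroup.mk g)⁻¹ * (QuotientGroup.mk c)⁻¹ := by
      rw [← QuotientGroup.mk_inv, ← QuotientGroup.mk_inv, ← QuotientGroup.mk_mul,
        ← QuotientGroup.mk_mul]
      exact 𝒢.mk_eq_mk_of_uset U (Filter.mem_of_superset h1 fun n hn => (hc n hn).symm)
    exact Set.mem_union_right _ (isConj_iff.2 ⟨QuotientGroup.mk c, heq.symm⟩)

lemma mk_mem_CGen_pow {g : ∀ n, 𝒢.G n} : ∀ (k : ℕ) (y : ∀ n, 𝒢.G n),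
    {n | y n ∈ CGen (g n) ^ k} ∈ U →
    (QuotientGroup.mk y : 𝒢.Q U) ∈ CGen (QuotientGroup.mk g : 𝒢.Q U) ^ k := by
  intro k
  induction k with
  | zero =>
      intro y hy
      rw [pow_zero, Set.mem_one]
      have h1 : {n | y n = (1 : ∀ n, 𝒢.G n) n} ∈ U := by
        refine Filter.mem_of_superset hy fun n hn => ?_
        simp only [Set.mem_setOf_eq] at hn ⊢
        rw [pow_zero, Set.mem_one] at hn
        exact hn
      have := 𝒢.mk_eq_mk_of_uset U h1
      simpa using this
  | succ k ih =>
      intro y hy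
      have hsk : ∀ n, ∃ a b : 𝒢.G n, y n ∈ CGen (g n) ^ (k + 1) →
          a ∈ CGen (g n) ^ k ∧ b ∈ CGen (g n) ∧ a * b = y n := by
        intro n
        by_cases hn : y n ∈ CGen (g n) ^ (k + 1)
        · rw [pow_succ] at hn
          obtain ⟨a, ha, b, hb, hab⟩ := hn
          exact ⟨a, b, fun _ => ⟨ha, hb, hab⟩⟩
        · exact ⟨1, 1, fun hcon => absurd hcon hn⟩
      choose a b hab using hsk
      have ha : {n | a n ∈ CGen (g n) ^ k} ∈ U :=
        Filter.mem_of_superset hy fun n hn => (hab n hn).1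
      have hb : {n | b n ∈ CGen (g n)} ∈ U :=
        Filter.mem_of_superset hy fun n hn => (hab n hn).2.1
      have heq : (QuotientGroup.mk y : 𝒢.Q U) = QuotientGroup.mk a * QuotientGroup.mk b := by
        rw [← QuotientGroup.mk_mul]
        exact 𝒢.mk_eq_mk_of_uset U (Filter.mem_of_superset hy fun n hn => ((hab n hn).2.2).symm)
      rw [heq, pow_succ]
      exact Set.mul_mem_mul (ih a ha) (𝒢.mk_mem_CGen U hb)

lemma ZU_mul (hstar2 : ∀ k : ℕ, ∃ l : ℕ, ∀ n (g h : 𝒢.G n),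
      (l : ℕ∞) ≤ Ng g → (l : ℕ∞) ≤ Ng h → (k : ℕ∞) ≤ Ng (g * h))
    {z z' : ∀ n, 𝒢.G n} (hz : z ∈ ZU 𝒢.G U) (hz' : z' ∈ ZU 𝒢.G U) :
    z * z' ∈ ZU 𝒢.G U := by
  intro k
  obtain ⟨l, hl⟩ := hstar2 (k + 1)
  refine Filter.mem_of_superset (Filter.inter_mem (hz l) (hz' l)) ?_
  rintro n ⟨h1, h2⟩
  simp only [Set.mem_setOf_eq] at h1 h2 ⊢
  have hle := hl n (z n) (z' n) (le_of_lt h1) (le_of_lt h2)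
  have hlt : (k : ℕ∞) < ((k + 1 : ℕ) : ℕ∞) := by exact_mod_cast Nat.lt_succ_self k
  exact lt_of_lt_of_le hlt hle

lemma ZU_inv {z : ∀ n, 𝒢.G n} (hz : z ∈ ZU 𝒢.G U) : z⁻¹ ∈ ZU 𝒢.G U := by
  intro k
  have : {n | (k : ℕ∞) < Ng (z⁻¹ n)} = {n | (k : ℕ∞) < Ng (z n)} := by
    ext n
    simp only [Set.mem_setOf_eq, Pi.inv_apply, Ng_inv]
  rw [this]
  exact hz k

lemma ZU_conj {z : ∀ n, 𝒢.G n} (hz : z ∈ ZU 𝒢.G U) (c : ∀ n, 𝒢.G n) :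
    c * z * c⁻¹ ∈ ZU 𝒢.G U := by
  intro k
  have : {n | (k : ℕ∞) < Ng ((c * z * c⁻¹) n)} = {n | (k : ℕ∞) < Ng (z n)} := by
    ext n
    simp only [Set.mem_setOf_eq, Pi.mul_apply, Pi.inv_apply, Ng_conj]
  rw [this]
  exact hz k

lemma ZU_one (hT : {n | ∃ x : 𝒢.G n, x ≠ 1} ∈ U) : (1 : ∀ n, 𝒢.G n) ∈ ZU 𝒢.G U := by
  intro k
  refine Filter.mem_of_superset hT fun n hn => ?_
  simp only [Set.mem_setOf_eq] at hn ⊢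
  rw [Pi.one_apply, Ng_one_of_nontrivial hn]
  exact (ENat.coe_ne_top k).lt_top

/-- The normal subgroup of classes with a representative in `ZU`. -/
def NZ (hT : {n | ∃ x : 𝒢.G n, x ≠ 1} ∈ U)
    (hstar2 : ∀ k : ℕ, ∃ l : ℕ, ∀ n (g h : 𝒢.G n),
      (l : ℕ∞) ≤ Ng g → (l : ℕ∞) ≤ Ng h → (k : ℕ∞) ≤ Ng (g * h)) :
    Subgroup (𝒢.Q U) where
  carrier := (QuotientGroup.mk : (∀ n, 𝒢.G n) → 𝒢.Q U) '' ZU 𝒢.G U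
  one_mem' := ⟨1, 𝒢.ZU_one U hT, by simp⟩
  mul_mem' := by
    rintro x y ⟨z, hz, rfl⟩ ⟨z', hz', rfl⟩
    exact ⟨z * z', 𝒢.ZU_mul U hstar2 hz hz', QuotientGroup.mk_mul _ _ _⟩
  inv_mem' := by
    rintro x ⟨z, hz, rfl⟩
    exact ⟨z⁻¹, 𝒢.ZU_inv U hz, QuotientGroup.mk_inv _ _⟩

lemma NZ_normal (hT : {n | ∃ x : 𝒢.G n, x ≠ 1} ∈ U)
    (hstar2 : ∀ k : ℕ, ∃ l : ℕ, ∀ n (g h : 𝒢.G n),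
      (l : ℕ∞) ≤ Ng g → (l : ℕ∞) ≤ Ng h → (k : ℕ∞) ≤ Ng (g * h)) :
    (𝒢.NZ U hT hstar2).Normal := by
  constructor
  rintro x ⟨z, hz, rfl⟩ q
  obtain ⟨c, rfl⟩ : ∃ c, (QuotientGroup.mk c : 𝒢.Q U) = q :=
    ⟨Quotient.out q, QuotientGroup.out_eq' q⟩
  refine ⟨c * z * c⁻¹, 𝒢.ZU_conj U hz c, ?_⟩
  rw [QuotientGroup.mk_mul, QuotientGroup.mk_mul, QuotientGroup.mk_inv]

lemma mem_of_lt_pnorm {g : ∀ n, 𝒢.G n} {a : ℝ≥0∞} (h : a < 𝒢.pnorm U g) :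
    {n | a < 𝒢.ν n (g n)} ∈ U := by
  by_contra hc
  have hcompl : {n | 𝒢.ν n (g n) ≤ a} ∈ U := by
    have := Ultrafilter.compl_mem_iff_notMem.2 hc
    convert this using 1
    ext n
    simp [not_lt]
  have hle : 𝒢.pnorm U g ≤ a := limsup_le_of_le (by isBoundedDefault) hcompl
  exact absurd h (not_lt.2 hle)

lemma exists_norm_ge_of_ne_one {x : 𝒢.Q U} (hx : x ≠ 1) :
    ∃ ε : ℝ≥0∞, 0 < ε ∧ {n | ε ≤ 𝒢.ν n (Quotient.out x n)} ∈ U := by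
  have hout : Quotient.out x ∉ 𝒢.E U := by
    intro h
    exact hx (by rw [← QuotientGroup.out_eq' x]; exact (QuotientGroup.eq_one_iff _).2 h)
  rw [𝒢.mem_E U] at hout
  push_neg at hout
  obtain ⟨ε, hε, hset⟩ := hout
  refine ⟨ε, hε, ?_⟩
  have := Ultrafilter.compl_mem_iff_notMem.2 hset
  convert this using 1
  ext n
  simp [not_lt]

end PMFamily

/-- If the norms of the family are bounded by `1`, the underlying family
of groups has the `(⋆)`-property, and the metric ultraproduct is a simple group, then the
metric ultraproduct is metrically uniformly simple. -/
theorem statement17 (𝒢 : PMFamily)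
    (hmetric : ∀ n (g : 𝒢.G n), 𝒢.ν n g = 0 ↔ g = 1)
    (hbdd : ∀ n (g : 𝒢.G n), 𝒢.ν n g ≤ 1)
    (U : Ultrafilter ℕ) (hU : (U : Filter ℕ) ≤ Filter.cofinite)
    (hstar : StarProp 𝒢.G)
    (hsimple : IsSimpleGroup (𝒢.Q U)) :
    ∀ t r : ℝ, 0 < r → r < t → ∃ N : ℕ, ∀ g : 𝒢.Q U,
      ENNReal.ofReal r < 𝒢.qnorm U g → 𝒢.qnorm U g ≤ ENNReal.ofReal t →
        ∀ x : 𝒢.Q U, 𝒢.qnorm U x < ENNReal.ofReal t → x ∈ CN N g := by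
  intro t r hr hrt
  classical
  have hT : {n | ∃ x : 𝒢.G n, x ≠ 1} ∈ U := by
    by_contra hc
    have h1 : {n | ∀ x : 𝒢.G n, x = 1} ∈ U := by
      have := Ultrafilter.compl_mem_iff_notMem.2 hc
      convert this using 1
      ext n
      simp
    have hall : ∀ z : 𝒢.Q U, z = 1 := by
      intro z
      rw [← QuotientGroup.out_eq' z, QuotientGroup.eq_one_iff]
      refine (𝒢.mem_E U).2 fun ε hε => ?_
      refine Filter.mem_of_superset h1 fun n hn => ?_
      simp only [Set.mem_setOf_eq] at hn ⊢
      rw [hn (Quotient.out z n), 𝒢.norm_one]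
      exact hε
    obtain ⟨x, y, hxy⟩ := exists_pair_ne (𝒢.Q U)
    exact hxy ((hall x).trans (hall y).symm)
  obtain ⟨N₀, hN₀⟩ := hstar.1
  have keyA : ∃ K : ℕ, ∀ g : ∀ n, 𝒢.G n, ENNReal.ofReal r < 𝒢.pnorm U g →
      {n | ∃ m ≤ K, CN m (g n) = Set.univ} ∈ U := by
    by_contra hA
    push_neg at hA
    choose g hg1 hg2 using hA
    have hg2' : ∀ K : ℕ, {n | (K : ℕ∞) < Ng (g K n)} ∈ U := by
      intro K
      have hcm := Ultrafilter.compl_mem_iff_notMem.2 (hg2 K)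
      refine Filter.mem_of_superset hcm fun n hn => ?_
      simp only [Set.mem_compl_iff, Set.mem_setOf_eq, not_exists, not_and] at hn
      simp only [Set.mem_setOf_eq]
      by_contra hK
      push_neg at hK
      have hlt : Ng (g K n) < ((K + 1 : ℕ) : ℕ∞) :=
        lt_of_le_of_lt hK (by exact_mod_cast Nat.lt_succ_self K)
      obtain ⟨m, hm, hCN⟩ := exists_CN_of_Ng_lt hlt
      have hmK : m ≤ K := Nat.lt_succ_iff.1 (by exact_mod_cast hm)
      exact hn m hmK hCN
    have hS : ∀ K : ℕ, {n | ENNReal.ofReal r < 𝒢.ν n (g K n)} ∈ U :=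
      fun K => 𝒢.mem_of_lt_pnorm U (hg1 K)
    set C : ℕ → Set ℕ := fun K => ⋂ j ∈ Set.Iic K,
      ({n | (j : ℕ∞) < Ng (g j n)} ∩ {n | ENNReal.ofReal r < 𝒢.ν n (g j n)}) with hCdef
    have hCU : ∀ K, C K ∈ U := fun K =>
      (Filter.biInter_mem (Set.finite_Iic K)).2 fun j _ => Filter.inter_mem (hg2' j) (hS j)
    set φ : ℕ → ℕ := fun n => Nat.findGreatest (fun K => n ∈ C K) n with hφ
    set h : ∀ n, 𝒢.G n := fun n => g (φ n) n with hh
    have hkey : ∀ K n, K ≤ n → n ∈ C K → K ≤ φ n ∧ n ∈ C (φ n) := by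
      intro K n h1 h2
      exact ⟨Nat.le_findGreatest (P := fun K => n ∈ C K) h1 h2,
        Nat.findGreatest_spec (P := fun K => n ∈ C K) h1 h2⟩
    have hatTop : ∀ K : ℕ, {n | K ≤ n} ∈ U := by
      intro K
      exact hU (by rw [Nat.cofinite_eq_atTop]; exact Filter.mem_atTop_sets.2 ⟨K, fun b hb => hb⟩)
    have hself : ∀ n, n ∈ C (φ n) →
        ((φ n : ℕ∞) < Ng (h n) ∧ ENNReal.ofReal r < 𝒢.ν n (h n)) := by
      intro n hn
      have := Set.mem_iInter₂.1 hn (φ n) (Set.mem_Iic.2 le_rfl)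
      exact ⟨this.1, this.2⟩
    have hZ : h ∈ ZU 𝒢.G U := by
      intro k
      refine Filter.mem_of_superset (Filter.inter_mem (hatTop k) (hCU k)) ?_
      rintro n ⟨h1, h2⟩
      obtain ⟨hk1, hk2⟩ := hkey k n h1 h2
      have := (hself n hk2).1
      exact lt_of_le_of_lt (by exact_mod_cast hk1) this
    have hnorm : {n | ENNReal.ofReal r < 𝒢.ν n (h n)} ∈ U := by
      refine Filter.mem_of_superset (Filter.inter_mem (hatTop 0) (hCU 0)) ?_
      rintro n ⟨h1, h2⟩
      obtain ⟨-, hk2⟩ := hkey 0 n h1 h2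
      exact (hself n hk2).2
    have hne : (QuotientGroup.mk h : 𝒢.Q U) ≠ 1 := by
      intro h1
      have hE : h ∈ 𝒢.E U := (QuotientGroup.eq_one_iff h).1 h1
      have hmem := Filter.inter_mem
        ((𝒢.mem_E U).1 hE (ENNReal.ofReal r) (ENNReal.ofReal_pos.2 hr)) hnorm
      obtain ⟨n, hn1, hn2⟩ := Ultrafilter.nonempty_of_mem hmem
      simp only [Set.mem_setOf_eq] at hn1 hn2
      exact absurd hn1 (not_lt.2 (le_of_lt hn2))
    have hnormal := 𝒢.NZ_normal U hT hstar.2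
    rcases hsimple.eq_bot_or_eq_top_of_normal (𝒢.NZ U hT hstar.2) hnormal with hbot | htop
    · have hmem : (QuotientGroup.mk h : 𝒢.Q U) ∈ 𝒢.NZ U hT hstar.2 := ⟨h, hZ, rfl⟩
      rw [hbot] at hmem
      exact hne (Subgroup.mem_bot.1 hmem)
    · set w : ∀ n, 𝒢.G n := fun n => Classical.choose (hN₀ n) with hwdef
      have hwspec : ∀ n, CN N₀ (w n) = Set.univ := fun n => Classical.choose_spec (hN₀ n)
      have hwmem : (QuotientGroup.mk w : 𝒢.Q U) ∈ 𝒢.NZ U hT hstar.2 := by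
        rw [htop]; trivial
      obtain ⟨z, hzZ, hzw⟩ := hwmem
      have heE : z⁻¹ * w ∈ 𝒢.E U := QuotientGroup.eq.1 hzw
      obtain ⟨l, hl⟩ := hstar.2 (N₀ + 1)
      by_cases hB : {n | (l : ℕ∞) ≤ Ng ((z⁻¹ * w) n)} ∈ U
      · obtain ⟨n, hn1, hn2⟩ := Ultrafilter.nonempty_of_mem (Filter.inter_mem (hzZ l) hB)
        simp only [Set.mem_setOf_eq] at hn1 hn2
        have hge := hl n (z n) ((z⁻¹ * w) n) (le_of_lt hn1) hn2
        have heqw : z n * (z⁻¹ * w) n = w n := by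
          simp [mul_assoc]
        rw [heqw] at hge
        have hle : Ng (w n) ≤ (N₀ : ℕ∞) := Ng_le_of_CN (hwspec n)
        exact absurd (le_trans hge hle) (by exact_mod_cast Nat.not_succ_le_self N₀)
      · have hBc : {n | Ng ((z⁻¹ * w) n) < (l : ℕ∞)} ∈ U := by
          have := Ultrafilter.compl_mem_iff_notMem.2 hB
          convert this using 1
          ext n
          simp [not_le]
        obtain ⟨x, hx⟩ := exists_ne (1 : 𝒢.Q U)
        obtain ⟨ε, hε, hεmem⟩ := 𝒢.exists_norm_ge_of_ne_one U hx
        set ε' : ℝ≥0∞ := min ε 1 with hε'def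
        have hε' : 0 < ε' := lt_min hε zero_lt_one
        have hε'top : ε' ≠ ⊤ := ne_top_of_le_ne_top ENNReal.one_ne_top (min_le_right _ _)
        have hε'mem : {n | ε' ≤ 𝒢.ν n (Quotient.out x n)} ∈ U := by
          refine Filter.mem_of_superset hεmem fun n hn => ?_
          simp only [Set.mem_setOf_eq] at hn ⊢
          exact le_trans (min_le_left _ _) hn
        set δ : ℝ≥0∞ := ε' / ((l : ℝ≥0∞) + 1) with hδdef
        have hlne : ((l : ℝ≥0∞) + 1) ≠ 0 := by simp
        have hltop : ((l : ℝ≥0∞) + 1) ≠ ⊤ :=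
          ENNReal.add_ne_top.2 ⟨ENNReal.natCast_ne_top l, ENNReal.one_ne_top⟩
        have hδpos : 0 < δ := ENNReal.div_pos hε'.ne' hltop
        have hδtop : δ ≠ ⊤ := by
          rw [hδdef]
          intro htop
          rw [ENNReal.div_eq_top] at htop
          rcases htop with ⟨-, h0⟩ | ⟨h1, -⟩
          · exact hlne h0
          · exact hε'top h1
        have hmulδ : (l : ℝ≥0∞) * δ < ε' := by
          have h1 : (l : ℝ≥0∞) * δ < ((l : ℝ≥0∞) + 1) * δ := by
            refine (ENNReal.mul_lt_mul_iff_left hδpos.ne' hδtop).2 ?_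
            exact ENNReal.lt_add_right (ENNReal.natCast_ne_top l) one_ne_zero
          have h2 : ((l : ℝ≥0∞) + 1) * δ = ε' := ENNReal.mul_div_cancel hlne hltop
          rwa [h2] at h1
        have hδmem : {n | 𝒢.ν n ((z⁻¹ * w) n) < δ} ∈ U := (𝒢.mem_E U).1 heE δ hδpos
        obtain ⟨n, hn1, hn2, hn3⟩ :=
          Ultrafilter.nonempty_of_mem (Filter.inter_mem hBc (Filter.inter_mem hε'mem hδmem))
        simp only [Set.mem_setOf_eq] at hn1 hn2 hn3
        obtain ⟨m, hml, hCNm⟩ := exists_CN_of_Ng_lt hn1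
        have hmemx : Quotient.out x n ∈ CN m ((z⁻¹ * w) n) := hCNm ▸ Set.mem_univ _
        obtain ⟨j, hjm, hjmem⟩ := mem_CN_iff.1 hmemx
        have hb1 : 𝒢.ν n (Quotient.out x n) ≤ (j : ℝ≥0∞) * 𝒢.ν n ((z⁻¹ * w) n) :=
          𝒢.norm_CGen_pow hjmem
        have hjl : (j : ℝ≥0∞) ≤ (l : ℝ≥0∞) := by
          have hml' : m ≤ l := le_of_lt (by exact_mod_cast hml)
          exact_mod_cast le_trans hjm hml'
        have hb2 : (j : ℝ≥0∞) * 𝒢.ν n ((z⁻¹ * w) n) ≤ (l : ℝ≥0∞) * δ :=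
          mul_le_mul' hjl (le_of_lt hn3)
        have : 𝒢.ν n (Quotient.out x n) < ε' := lt_of_le_of_lt (le_trans hb1 hb2) hmulδ
        exact absurd hn2 (not_le.2 this)
  obtain ⟨K, hK⟩ := keyA
  refine ⟨K, fun g hg _ x _ => ?_⟩
  have hA : {n | ∃ m ≤ K, CN m (Quotient.out g n) = Set.univ} ∈ U := hK _ hg
  have hA' : (⋃ m ∈ Set.Iic K, {n | CN m (Quotient.out g n) = Set.univ}) ∈ U := by
    convert hA using 1
    ext n
    simp [Set.mem_iUnion]
  obtain ⟨m, hmK, hm⟩ := (Ultrafilter.finite_biUnion_mem_iff (Set.finite_Iic K)).1 hA'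
  have hx2 : {n | Quotient.out x n ∈ CN m (Quotient.out g n)} ∈ U := by
    refine Filter.mem_of_superset hm fun n hn => ?_
    simp only [Set.mem_setOf_eq] at hn ⊢
    rw [hn]
    exact Set.mem_univ _
  have hx3 : (⋃ j ∈ Set.Iic m, {n | Quotient.out x n ∈ CGen (Quotient.out g n) ^ j}) ∈ U := by
    refine Filter.mem_of_superset hx2 fun n hn => ?_
    obtain ⟨j, hjm, hj⟩ := mem_CN_iff.1 hn
    exact Set.mem_biUnion hjm hj
  obtain ⟨j, hjm, hj⟩ := (Ultrafilter.finite_biUnion_mem_iff (Set.finite_Iic m)).1 hx3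
  have hmem := 𝒢.mk_mem_CGen_pow U j (Quotient.out x) hj
  rw [QuotientGroup.out_eq' x, QuotientGroup.out_eq' g] at hmem
  exact mem_CN_iff.2 ⟨j, le_trans hjm hmK, hmem⟩
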